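/- Let n be an odd prime and let P be a set of permutations of ZMod n such that the sum of any two distinct elements of P is a permutation. Then |P| ≤ (e²/π) · n · ((n-1)/e)^{(n-1)/2}. -/

import Mathlib

open Finset Module Pointwise Real

open Module Finset

-- coordinate selection
lemma exists_coords (K : Type*) [Field K] (ι : Type*) [Fintype ι] [DecidableEq ι]
    (W : Submodule K (ι → K)) :
    ∃ s : Finset ι, s.card = finrank K W ∧
      ∀ v ∈ W, (∀ i ∈ s, v i = 0) → v = 0 := by
  classical
  set φ : ι → Module.Dual K W := fun i => (LinearMap.proj i).comp W.subtype with hφ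
  have hspan : Submodule.span K (Set.range φ) = ⊤ := by
    set Φ := Submodule.span K (Set.range φ)
    have hco : Φ.dualCoannihilator = ⊥ := by
      rw [Submodule.eq_bot_iff]
      intro w hw
      rw [Submodule.mem_dualCoannihilator] at hw
      have : ∀ i, (w : ι → K) i = 0 := fun i =>
        hw (φ i) (Submodule.subset_span ⟨i, rfl⟩)
      ext1
      exact funext this
    have h1 := Subspace.finrank_add_finrank_dualCoannihilator_eq Φ
    rw [hco, finrank_bot, add_zero] at h1
    exact Submodule.eq_top_of_finrank_eq (h1.trans (Subspace.dual_finrank_eq (V := W)).symm)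
  obtain ⟨b, hb_sub, hb_span, hb_li⟩ := exists_linearIndependent K (Set.range φ)
  rw [hspan] at hb_span
  have hbfin : b.Finite := hb_li.setFinite
  haveI : Fintype b := hbfin.fintype
  have hbasis : Module.finrank K (Module.Dual K W) = Fintype.card b := by
    have : Basis b K (Module.Dual K W) := Basis.mk hb_li (by rw [Subtype.range_coe, hb_span])
    exact finrank_eq_card_basis this
  -- choice function
  have hc : ∀ x : b, ∃ i : ι, φ i = (x : Module.Dual K W) := fun x => hb_sub x.2
  choose c hc' using hc
  have hcinj : Function.Injective c := by
    intro x y hxy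
    apply Subtype.ext
    rw [← hc' x, ← hc' y, hxy]
  refine ⟨Finset.univ.image c, ?_, ?_⟩
  · rw [Finset.card_image_of_injective _ hcinj, Finset.card_univ, ← hbasis,
      Subspace.dual_finrank_eq]
  · intro v hv hzero
    have : ∀ f : Module.Dual K W, f ⟨v, hv⟩ = 0 := by
      intro f
      have hfmem : f ∈ Submodule.span K b := by rw [hb_span]; trivial
      induction hfmem using Submodule.span_induction with
      | mem x hx =>
        have : x = φ (c ⟨x, hx⟩) := (hc' ⟨x, hx⟩).symm
        rw [this]
        exact hzero _ (Finset.mem_image.2 ⟨⟨x, hx⟩, Finset.mem_univ _, rfl⟩)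
      | zero => simp
      | add x y _ _ hx hy => simp [hx, hy]
      | smul a x _ hx => simp [hx]
    have := (Module.forall_dual_apply_eq_zero_iff K (⟨v, hv⟩ : W)).1 this
    simpa [Submodule.mk_eq_zero] using this

lemma count_lemma (n : ℕ) (hp : n.Prime) (hodd : Odd n)
    (P : Finset (Equiv.Perm (ZMod n)))
    (h : ∀ σ ∈ P, ∀ τ ∈ P, σ ≠ τ → Function.Bijective (fun i => σ i + τ i))
    (r : ℕ) (e : Fin r → ZMod n) (he : Function.Injective e)
    (hinj : ∀ σ ∈ P, ∀ τ ∈ P, (∀ t : Fin r, σ (e t) = τ (e t)) → σ = τ) :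
    P.card ≤ ∏ k ∈ range r, (if k = 0 then n else (n - k + 1) / 2) := by
  classical
  haveI : NeZero n := ⟨hp.ne_zero⟩
  haveI : Fact n.Prime := ⟨hp⟩
  have hn3 : 3 ≤ n := by
    have h2le := hp.two_le
    have hne2 : n ≠ 2 := by rintro rfl; exact (by decide : ¬ Odd 2) hodd
    omega
  have h2 : (2 : ZMod n) ≠ 0 := by
    intro hc
    have hdvd : n ∣ 2 := by
      have : ((2 : ℕ) : ZMod n) = 0 := by exact_mod_cast hc
      exact (ZMod.natCast_eq_zero_iff 2 n).1 this
    have := Nat.le_of_dvd (by norm_num) hdvd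
    omega
  have hdouble : ∀ a b : ZMod n, a + a = b + b → a = b := by
    intro a b hab
    have : (2 : ZMod n) * a = 2 * b := by ring_nf; linear_combination hab
    exact mul_left_cancel₀ h2 this
  have hrn : r ≤ n := by
    have := Fintype.card_le_of_injective e he
    simpa [ZMod.card] using this
  -- restriction maps
  set res : ℕ → Equiv.Perm (ZMod n) → (Fin r → ZMod n) :=
    fun k σ t => if t.1 < k then σ (e t) else 0 with hres
  have key : ∀ k ≤ r, ((P.image (res k)).card ≤ ∏ j ∈ range k, (if j = 0 then n else (n - j + 1) / 2)) := by
    intro k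
    induction k with
    | zero =>
      intro _
      simp only [range_zero, prod_empty]
      rcases P.eq_empty_or_nonempty with hP | hP
      · simp [hP]
      · have : P.image (res 0) = {fun _ => 0} := by
          apply Finset.eq_singleton_iff_nonempty_unique_mem.2
          refine ⟨hP.image _, ?_⟩
          intro g hg
          rw [mem_image] at hg
          obtain ⟨σ, _, rfl⟩ := hg
          funext t; simp [hres]
        simp [this]
    | succ k ih =>
      intro hk1
      have hk : k < r := hk1
      have ihk := ih hk.le
      -- the projection map
      set ρ : (Fin r → ZMod n) → (Fin r → ZMod n) :=
        fun g t => if t.1 < k then g t else 0 with hρ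
      have himg : (P.image (res (k+1))).image ρ = P.image (res k) := by
        rw [Finset.image_image]
        apply Finset.image_congr
        intro σ _
        funext t
        simp only [Function.comp_apply, hρ, hres]
        by_cases ht : t.1 < k
        · simp [ht, ht.trans (Nat.lt_succ_self k)]
        · simp [ht]
      -- fiber bound
      have hfib : ∀ g₀ ∈ (P.image (res (k+1))).image ρ,
          ((P.image (res (k+1))).filter (fun g => ρ g = g₀)).card
            ≤ (if k = 0 then n else (n - k + 1) / 2) := by
        intro g₀ hg₀
        set km : Fin r := ⟨k, hk⟩ with hkm
        set A : Finset (ZMod n) :=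
          (P.filter (fun σ => res k σ = g₀)).image (fun σ => σ (e km)) with hA
        have hfibA : ((P.image (res (k+1))).filter (fun g => ρ g = g₀)).card ≤ A.card := by
          apply Finset.card_le_card_of_injOn (fun g => g km)
          · intro g hg
            rw [mem_coe, mem_filter, mem_image] at hg
            obtain ⟨⟨σ, hσP, rfl⟩, hρg⟩ := hg
            rw [mem_coe, hA, mem_image]
            refine ⟨σ, ?_, ?_⟩
            · rw [mem_filter]
              refine ⟨hσP, ?_⟩
              rw [← hρg]
              funext t
              simp only [hρ, hres]
              by_cases ht : t.1 < k
              · simp [ht, ht.trans (Nat.lt_succ_self k)]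
              · simp [ht]
            · simp [hres, hkm]
          · intro g1 hg1 g2 hg2 heq
            rw [mem_coe, mem_filter, mem_image] at hg1 hg2
            obtain ⟨⟨σ1, _, rfl⟩, hρ1⟩ := hg1
            obtain ⟨⟨σ2, _, rfl⟩, hρ2⟩ := hg2
            funext t
            by_cases htk : t.1 < k
            · have := congrFun (hρ1.trans hρ2.symm) t
              simpa [hρ, htk, hres] using this
            · by_cases htk1 : t.1 < k + 1
              · have : t = km := by
                  apply Fin.ext
                  simp [hkm]; omega
                rw [this]
                simpa [hres, hkm] using heq
              · simp [hres, htk1]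
        refine hfibA.trans ?_
        by_cases hk0 : k = 0
        · simp only [hk0, if_pos]
          calc A.card ≤ (Finset.univ : Finset (ZMod n)).card := Finset.card_le_card (Finset.subset_univ A)
          _ = n := by simp [ZMod.card]
        · simp only [hk0, if_neg, ite_false]
          -- Cauchy-Davenport step
          rcases A.eq_empty_or_nonempty with hAe | hAne
          · simp [hAe]
          -- pick a representative
          have hPne : (P.filter (fun σ => res k σ = g₀)).Nonempty := by
            obtain ⟨a, ha⟩ := hAne
            rw [hA, mem_image] at ha
            obtain ⟨σ, hσ, _⟩ := ha
            exact ⟨σ, hσ⟩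
          obtain ⟨σ₀, hσ₀⟩ := hPne
          rw [mem_filter] at hσ₀
          obtain ⟨hσ₀P, hσ₀g⟩ := hσ₀
          -- forbidden set
          set D : Finset (ZMod n) :=
            ((Finset.univ : Finset (Fin r)).filter (fun t => t.1 < k)).image
              (fun t => σ₀ (e t) + σ₀ (e t)) with hD
          have hfiltcard : ((Finset.univ : Finset (Fin r)).filter (fun t => t.1 < k)).card = k := by
            apply Finset.card_eq_of_bijective (fun i hi => (⟨i, hi.trans hk⟩ : Fin r))
            · intro a ha
              rw [mem_filter] at ha
              exact ⟨a.1, ha.2, Fin.ext rfl⟩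
            · intro i hi
              rw [mem_filter]
              exact ⟨mem_univ _, hi⟩
            · intro i j hi hj hij
              simpa using congrArg Fin.val hij
          have hDcard : D.card = k := by
            rw [hD, Finset.card_image_of_injOn, hfiltcard]
            intro t1 _ t2 _ h12
            exact he (σ₀.injective (hdouble _ _ h12))
          have hsub : A + A ⊆ Finset.univ \ D := by
            intro x hx
            rw [Finset.mem_add] at hx
            obtain ⟨a, ha, b, hb, rfl⟩ := hx
            rw [hA, mem_image] at ha hb
            obtain ⟨σ, hσ, rfl⟩ := ha
            obtain ⟨τ, hτ, rfl⟩ := hb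
            rw [mem_filter] at hσ hτ
            rw [Finset.mem_sdiff]
            refine ⟨mem_univ _, ?_⟩
            rw [hD, mem_image]
            rintro ⟨t, htf, hteq⟩
            rw [mem_filter] at htf
            have htk : t.1 < k := htf.2
            have hσt : σ (e t) = σ₀ (e t) := by
              have e1 := congrFun hσ.2 t
              have e2 := congrFun hσ₀g t
              simp only [hres, htk, if_pos] at e1 e2
              rw [e1, ← e2]
            have hτt : τ (e t) = σ₀ (e t) := by
              have e1 := congrFun hτ.2 t
              have e2 := congrFun hσ₀g t
              simp only [hres, htk, if_pos] at e1 e2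
              rw [e1, ← e2]
            have hkmt : km ≠ t := by
              intro hc
              have hval : k = t.1 := congrArg Fin.val hc
              omega
            by_cases hστ : σ = τ
            · subst hστ
              have heq2 : σ (e km) = σ (e t) := by
                apply hdouble
                rw [← hteq, hσt]
              exact hkmt (he (σ.injective heq2))
            · have hbij := h σ hσ.1 τ hτ.1 hστ
              have heq2 : (fun i => σ i + τ i) (e km) = (fun i => σ i + τ i) (e t) := by
                simp only
                rw [hσt, hτt, ← hteq]
              exact hkmt (he (hbij.injective heq2))
          have hAA : (A + A).card ≤ n - k := by
            have h1 : (A + A).card ≤ (Finset.univ \ D).card := Finset.card_le_card hsub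
            rwa [Finset.card_sdiff_of_subset (Finset.subset_univ D), Finset.card_univ, ZMod.card, hDcard] at h1
          have hcd := ZMod.cauchy_davenport hp hAne hAne
          have hmin : min n (A.card + A.card - 1) ≤ n - k := hcd.trans hAA
          have hk1 : 1 ≤ k := Nat.pos_of_ne_zero hk0
          have hkn : k < n := lt_of_lt_of_le hk hrn
          omega
      calc (P.image (res (k+1))).card
          ≤ (if k = 0 then n else (n - k + 1) / 2) * ((P.image (res (k+1))).image ρ).card :=
            Finset.card_le_mul_card_image _ _ hfib
        _ = (if k = 0 then n else (n - k + 1) / 2) * (P.image (res k)).card := by rw [himg]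
        _ ≤ _ := by
            rw [Finset.prod_range_succ, mul_comm]
            exact Nat.mul_le_mul (ihk) (le_refl _)
  have hPcard : P.card = (P.image (res r)).card := by
    rw [Finset.card_image_of_injOn]
    intro σ hσ τ hτ heq
    apply hinj σ hσ τ hτ
    intro t
    have := congrFun heq t
    simpa [hres, t.2] using this
  rw [hPcard]
  exact key r le_rfl

lemma dim_lemma (n : ℕ) (hp : n.Prime) (hodd : Odd n) (hn5 : 5 ≤ n)
    (P : Finset (Equiv.Perm (ZMod n)))
    (h : ∀ σ ∈ P, ∀ τ ∈ P, σ ≠ τ → Function.Bijective (fun i => σ i + τ i)) :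
    finrank (ZMod n) (Submodule.span (ZMod n)
      ((fun σ : Equiv.Perm (ZMod n) => (σ : ZMod n → ZMod n)) '' P)) ≤ (n - 1) / 2 := by
  classical
  haveI : NeZero n := ⟨hp.ne_zero⟩
  haveI : Fact n.Prime := ⟨hp⟩
  have h2 : (2 : ZMod n) ≠ 0 := by
    intro hc
    have hdvd : n ∣ 2 := by
      have : ((2 : ℕ) : ZMod n) = 0 := by exact_mod_cast hc
      exact (ZMod.natCast_eq_zero_iff 2 n).1 this
    have := Nat.le_of_dvd (by norm_num) hdvd
    omega
  have h3 : (3 : ZMod n) ≠ 0 := by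
    intro hc
    have hdvd : n ∣ 3 := by
      have : ((3 : ℕ) : ZMod n) = 0 := by exact_mod_cast hc
      exact (ZMod.natCast_eq_zero_iff 3 n).1 this
    have := Nat.le_of_dvd (by norm_num) hdvd
    omega
  -- sums of powers
  have hsum : ∑ x : ZMod n, x = 0 := by
    have hneg : ∑ x : ZMod n, x = ∑ x : ZMod n, -x :=
      (Function.Bijective.sum_comp (neg_involutive.bijective) (fun x => x)).symm
    rw [Finset.sum_neg_distrib] at hneg
    have : (2 : ZMod n) * ∑ x : ZMod n, x = 0 := by
      have := hneg
      ring_nf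
      linear_combination hneg
    rcases mul_eq_zero.1 this with hc | hc
    · exact absurd hc h2
    · exact hc
  have hsumsq : ∑ x : ZMod n, x ^ 2 = 0 := by
    have hbij : Function.Bijective (fun x : ZMod n => 2 * x) := mulLeft_bijective₀ 2 h2
    have h1 : ∑ x : ZMod n, (2 * x) ^ 2 = ∑ x : ZMod n, x ^ 2 :=
      Function.Bijective.sum_comp hbij (fun y => y ^ 2)
    have h2' : ∑ x : ZMod n, (2 * x) ^ 2 = 4 * ∑ x : ZMod n, x ^ 2 := by
      rw [Finset.mul_sum]
      apply Finset.sum_congr rfl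
      intro x _
      ring
    have h4 : (3 : ZMod n) * ∑ x : ZMod n, x ^ 2 = 0 := by
      have := h1.symm.trans h2'
      linear_combination -this
    rcases mul_eq_zero.1 h4 with hc | hc
    · exact absurd hc h3
    · exact hc
  -- bilinear form
  set B : LinearMap.BilinForm (ZMod n) (ZMod n → ZMod n) :=
    LinearMap.mk₂ (ZMod n) (fun v w => ∑ i, v i * w i)
      (by intros; simp [add_mul, Finset.sum_add_distrib])
      (by intros; simp [Finset.mul_sum]; ring_nf)
      (by intros; simp [mul_add, Finset.sum_add_distrib])
      (by intros; simp [Finset.mul_sum]; ring_nf; simp [mul_assoc, mul_comm, mul_left_comm])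
    with hB
  have hBapp : ∀ v w, B v w = ∑ i, v i * w i := fun v w => rfl
  have hrefl : B.IsRefl := by
    intro v w hvw
    rw [hBapp] at hvw ⊢
    rw [← hvw]
    apply Finset.sum_congr rfl
    intros; ring
  have hnondeg : B.Nondegenerate := by
    refine ⟨?_, ?_⟩
    · intro v hv
      funext j
      have := hv (Pi.single j 1)
      rw [hBapp] at this
      simpa [Pi.single_apply, Finset.sum_ite_eq'] using this
    · intro v hv
      funext j
      have := hv (Pi.single j 1)
      rw [hBapp] at this
      simpa [Pi.single_apply, Finset.sum_ite_eq, Finset.sum_ite_eq'] using this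
  -- permutation sums
  have hpermsum : ∀ σ : Equiv.Perm (ZMod n), ∑ i, (σ i) ^ 2 = 0 := by
    intro σ
    rw [Function.Bijective.sum_comp σ.bijective (fun y => y ^ 2)]
    exact hsumsq
  -- orthogonality on the generating set
  set S : Set (ZMod n → ZMod n) := (fun σ : Equiv.Perm (ZMod n) => (σ : ZMod n → ZMod n)) '' P
    with hS
  have horth : ∀ x ∈ S, ∀ y ∈ S, B x y = 0 := by
    rintro x ⟨σ, hσ, rfl⟩ y ⟨τ, hτ, rfl⟩
    by_cases hστ : σ = τ
    · subst hστ
      rw [hBapp]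
      have : ∑ i, σ i * σ i = ∑ i, (σ i)^2 := by
        apply Finset.sum_congr rfl; intros; ring
      rw [this]
      exact hpermsum σ
    · have hbij := h σ (by simpa using hσ) τ (by simpa using hτ) hστ
      have hsum2 : ∑ i, (σ i + τ i) ^ 2 = 0 := by
        rw [Function.Bijective.sum_comp hbij (fun y => y ^ 2)]
        exact hsumsq
      have hexp : ∑ i, (σ i + τ i) ^ 2
          = ∑ i, (σ i)^2 + (2 * ∑ i, σ i * τ i + ∑ i, (τ i)^2) := by
        rw [Finset.mul_sum, ← Finset.sum_add_distrib, ← Finset.sum_add_distrib]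
        apply Finset.sum_congr rfl
        intros; ring
      rw [hexp, hpermsum σ, hpermsum τ, zero_add, add_zero] at hsum2
      rw [hBapp]
      rcases mul_eq_zero.1 hsum2 with hc | hc
      · exact absurd hc h2
      · exact hc
  set W := Submodule.span (ZMod n) S with hW
  have hiso : W ≤ B.orthogonal W := by
    intro x hx
    rw [LinearMap.BilinForm.mem_orthogonal_iff]
    intro y hy
    induction hy using Submodule.span_induction with
    | mem z hz =>
      induction hx using Submodule.span_induction with
      | mem w hw => exact horth z hz w hw
      | zero => simp
      | add a b _ _ ha hb => simp [map_add, ha, hb]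
      | smul c a _ ha => simp [map_smul, ha]
    | zero => simp
    | add a b _ _ ha hb => simp [ha, hb]
    | smul c a _ ha => simp [ha]
  haveI : FiniteDimensional (ZMod n) (ZMod n → ZMod n) := by infer_instance
  have hrank := LinearMap.BilinForm.finrank_orthogonal hnondeg W
  have hle : finrank (ZMod n) W ≤ finrank (ZMod n) (B.orthogonal W) :=
    Submodule.finrank_mono hiso
  rw [hrank] at hle
  have hdim : finrank (ZMod n) (ZMod n → ZMod n) = n := by
    rw [Module.finrank_pi]
    simp [ZMod.card]
  rw [hdim] at hle
  have hW' : finrank (ZMod n) W ≤ n := by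
    calc finrank (ZMod n) W ≤ finrank (ZMod n) (ZMod n → ZMod n) := W.finrank_le
    _ = n := hdim
  obtain ⟨l, hl⟩ := hodd
  omega

lemma exp_aux (m : ℕ) (hm : 1 ≤ m) : Real.exp (2 / (2 * (m:ℝ) + 1)) ≤ 1 + 1 / m := by
  have hM : (1 : ℝ) ≤ m := by exact_mod_cast hm
  set M : ℝ := (m : ℝ) with hMdef
  have hMpos : (0 : ℝ) < M := by linarith
  have hden : (0 : ℝ) < 2 * M + 1 := by linarith
  set x : ℝ := 2 / (2 * M + 1) with hx
  have hx0 : 0 ≤ x := by positivity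
  have hx1 : x ≤ 1 := by
    rw [hx, div_le_one hden]; linarith
  have hb := Real.exp_bound' hx0 hx1 (n := 3) (by norm_num)
  have hsum : (∑ i ∈ Finset.range 3, x ^ i / i.factorial) = 1 + x + x ^ 2 / 2 := by
    simp [Finset.sum_range_succ, Nat.factorial]
  rw [hsum] at hb
  have hb' : Real.exp x ≤ 1 + x + x ^ 2 / 2 + x ^ 3 * (2/9) := by
    refine hb.trans (le_of_eq ?_)
    have h36 : ((Nat.factorial 3 : ℕ) : ℝ) = 6 := by norm_num [Nat.factorial]
    rw [h36]
    norm_num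
    ring
  refine hb'.trans ?_
  rw [hx]
  have key : (1 + 2/(2*M+1) + (2/(2*M+1))^2/2 + (2/(2*M+1))^3*(2/9)) * (9*M*(2*M+1)^3)
      ≤ (1 + 1/M) * (9*M*(2*M+1)^3) := by
    have e1 : (1 + 2/(2*M+1) + (2/(2*M+1))^2/2 + (2/(2*M+1))^3*(2/9)) * (9*M*(2*M+1)^3)
        = 9*M*(2*M+1)^3 + 18*M*(2*M+1)^2 + 18*M*(2*M+1) + 16*M := by
      field_simp
      ring
    have e2 : (1 + 1/M) * (9*M*(2*M+1)^3) = 9*M*(2*M+1)^3 + 9*(2*M+1)^3 := by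
      field_simp
    rw [e1, e2]
    nlinarith [hM, sq_nonneg M]
  have hpos : (0:ℝ) < 9*M*(2*M+1)^3 := by positivity
  exact le_of_mul_le_mul_right key hpos

lemma exp_one_le (k : ℕ) (hk : 1 ≤ k) :
    Real.exp 1 ≤ (((k:ℝ)+1)/k) ^ k * Real.sqrt (((k:ℝ)+1)/k) := by
  have hkR : (1:ℝ) ≤ (k:ℝ) := by exact_mod_cast hk
  have hkpos : (0:ℝ) < k := by linarith
  have ha : (0:ℝ) < ((k:ℝ)+1)/k := by positivity
  have hea := exp_aux k hk
  have h1p : (1:ℝ) + 1/(k:ℝ) = ((k:ℝ)+1)/k := by field_simp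
  rw [h1p] at hea
  have hc : (0:ℝ) ≤ (k:ℝ) + 1/2 := by positivity
  have hrp := Real.rpow_le_rpow (Real.exp_pos _).le hea hc
  have hL : Real.exp (2 / (2*(k:ℝ)+1)) ^ (((k:ℝ) + 1/2) : ℝ) = Real.exp 1 := by
    rw [← Real.exp_mul]
    congr 1
    field_simp
  have hR : (((k:ℝ)+1)/k) ^ (((k:ℝ) + 1/2) : ℝ)
      = (((k:ℝ)+1)/k) ^ k * Real.sqrt (((k:ℝ)+1)/k) := by
    rw [Real.rpow_add ha, Real.rpow_natCast, Real.sqrt_eq_rpow]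
  rw [hL, hR] at hrp
  exact hrp

lemma fact_bound (m : ℕ) (hm : 1 ≤ m) :
    (m.factorial : ℝ) ≤ Real.exp 1 * Real.sqrt m * ((m : ℝ) / Real.exp 1) ^ m := by
  induction m with
  | zero => omega
  | succ k ih =>
    rcases Nat.eq_or_lt_of_le hm with he | hlt
    · have : k = 0 := by omega
      subst this
      have hval : Real.exp 1 * Real.sqrt 1 * ((1:ℝ) / Real.exp 1) ^ 1 = 1 := by
        rw [Real.sqrt_one]
        field_simp
      norm_num [Nat.factorial]
    · have hk1 : 1 ≤ k := by omega
      have ihk := ih hk1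
      have hkR : (1 : ℝ) ≤ (k : ℝ) := by exact_mod_cast hk1
      have hkpos : (0 : ℝ) < k := by linarith
      have hepos : (0 : ℝ) < Real.exp 1 := Real.exp_pos 1
      have hstep := exp_one_le k hk1
      -- (k+1)! ≤ (k+1) * (e * √k * (k/e)^k)
      have h1 : ((k+1).factorial : ℝ) ≤ ((k:ℝ)+1) * (Real.exp 1 * Real.sqrt k * ((k:ℝ)/Real.exp 1) ^ k) := by
        rw [Nat.factorial_succ]
        push_cast
        exact mul_le_mul_of_nonneg_left ihk (by positivity)
      refine h1.trans ?_
      -- key : (k+1) * √k * (k/e)^k * e ≤ √(k+1) * ((k+1)/e)^(k+1) * e ...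
      have hgoal : ((k:ℝ)+1) * (Real.exp 1 * Real.sqrt k * ((k:ℝ)/Real.exp 1) ^ k)
          ≤ Real.exp 1 * Real.sqrt ((k:ℝ)+1) * (((k:ℝ)+1)/Real.exp 1) ^ (k+1) := by
        have hsqrt_mul : Real.sqrt (((k:ℝ)+1)/k) * Real.sqrt k = Real.sqrt ((k:ℝ)+1) := by
          rw [← Real.sqrt_mul (by positivity)]
          congr 1
          field_simp
        have hpow_mul : (((k:ℝ)+1)/k) ^ k * ((k:ℝ)/Real.exp 1) ^ k = (((k:ℝ)+1)/Real.exp 1) ^ k := by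
          rw [← mul_pow]
          congr 1
          field_simp
        -- multiply hstep by (√k * (k/e)^k * (k+1)/e * e) ... direct:
        have hmul := mul_le_mul_of_nonneg_right hstep
          (by positivity : (0:ℝ) ≤ Real.sqrt k * ((k:ℝ)/Real.exp 1) ^ k * (((k:ℝ)+1)))
        calc ((k:ℝ)+1) * (Real.exp 1 * Real.sqrt k * ((k:ℝ)/Real.exp 1) ^ k)
            = Real.exp 1 * (Real.sqrt k * ((k:ℝ)/Real.exp 1) ^ k * ((k:ℝ)+1)) := by ring
          _ ≤ ((((k:ℝ)+1)/k) ^ k * Real.sqrt (((k:ℝ)+1)/k)) * (Real.sqrt k * ((k:ℝ)/Real.exp 1) ^ k * ((k:ℝ)+1)) := hmul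
          _ = (Real.sqrt (((k:ℝ)+1)/k) * Real.sqrt k) * ((((k:ℝ)+1)/k) ^ k * ((k:ℝ)/Real.exp 1) ^ k) * ((k:ℝ)+1) := by ring
          _ = Real.sqrt ((k:ℝ)+1) * (((k:ℝ)+1)/Real.exp 1) ^ k * ((k:ℝ)+1) := by rw [hsqrt_mul, hpow_mul]
          _ = Real.exp 1 * Real.sqrt ((k:ℝ)+1) * (((k:ℝ)+1)/Real.exp 1) ^ (k+1) := by
              rw [pow_succ]
              field_simp
      convert hgoal using 2
      · rfl
      · push_cast; ring
      · push_cast; ring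

lemma three_case : ∀ P : Finset (Equiv.Perm (ZMod 3)),
    (∀ σ ∈ P, ∀ τ ∈ P, σ ≠ τ → Function.Bijective (fun i => σ i + τ i)) → P.card ≤ 3 := by
  decide

lemma prod_reflect (m : ℕ) (hm : 2 ≤ m) :
    (∏ k ∈ Ico 1 m, (2*m+2 - k)) * (m+2).factorial = (2*m+1).factorial := by
  have h1 : ∏ k ∈ Ico 1 m, (2*m+2 - k) = ∏ j ∈ Ico (m+3) (2*m+2), j := by
    apply Finset.prod_nbij' (i := fun k => 2*m+2 - k) (j := fun j => 2*m+2 - j)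
    · intro a ha; rw [Finset.mem_Ico] at *; omega
    · intro a ha; rw [Finset.mem_Ico] at *; omega
    · intro a ha; rw [Finset.mem_Ico] at ha; omega
    · intro a ha; rw [Finset.mem_Ico] at ha; omega
    · intro a ha; rfl
  rw [h1]
  have h2 : (m+2).factorial = ∏ j ∈ Ico 1 (m+3), j := by
    rw [Finset.prod_Ico_id_eq_factorial]
  have h3 : (2*m+1).factorial = ∏ j ∈ Ico 1 (2*m+2), j := by
    rw [Finset.prod_Ico_id_eq_factorial]
  rw [h2, h3, mul_comm]
  exact Finset.prod_Ico_consecutive _ (by omega) (by omega)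

lemma const_ineq (m : ℕ) : 2 * Real.pi * Real.sqrt m ≤ Real.exp 1 * ((m : ℝ) + 2) := by
  have hs := Real.sqrt_nonneg (m : ℝ)
  have hsq : Real.sqrt m ^ 2 = (m : ℝ) := Real.sq_sqrt (by positivity)
  have hpi := Real.pi_lt_d2
  have hexp := Real.exp_one_gt_d9
  nlinarith [sq_nonneg (Real.sqrt m * 6 - 7), Real.pi_pos]

theorem stmt11 (n : ℕ) (hp : n.Prime) (hodd : Odd n) (P : Finset (Equiv.Perm (ZMod n)))
    (h : ∀ σ ∈ P, ∀ τ ∈ P, σ ≠ τ → Function.Bijective (fun i => σ i + τ i)) :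
    (P.card : ℝ) ≤ (Real.exp 1) ^ 2 / Real.pi * n *
      (((n : ℝ) - 1) / Real.exp 1) ^ ((n - 1) / 2) := by
  classical
  haveI : Fact n.Prime := ⟨hp⟩
  haveI : NeZero n := ⟨hp.ne_zero⟩
  by_cases hn3 : n = 3
  · subst hn3
    have hP3 := three_case P h
    have hexp1 : ((3:ℕ) - 1) / 2 = 1 := by norm_num
    rw [hexp1]
    have hval : Real.exp 1 ^ 2 / Real.pi * (3:ℕ) * (((3:ℕ):ℝ) - 1) / Real.exp 1
        = 6 * Real.exp 1 / Real.pi := by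
      have he2 : Real.exp 1 ^ 2 = Real.exp 2 := by
        rw [Real.exp_one_pow]; norm_num
      push_cast
      field_simp
      ring
    calc (P.card : ℝ) ≤ 3 := by exact_mod_cast hP3
      _ ≤ Real.exp 1 ^ 2 / Real.pi * (3:ℕ) * ((((3:ℕ):ℝ) - 1) / Real.exp 1) ^ 1 := by
          rw [pow_one, ← mul_div_assoc, hval, le_div_iff₀ Real.pi_pos]
          nlinarith [Real.exp_one_gt_d9, Real.pi_lt_d2, Real.pi_pos]
  · have hn5 : 5 ≤ n := by
      obtain ⟨l, hl⟩ := hodd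
      have h2le := hp.two_le
      rcases Nat.lt_or_ge l 2 with hll | hll
      · interval_cases l <;> omega
      · omega
    set m := (n - 1) / 2 with hm
    have hnm : n = 2 * m + 1 := by
      obtain ⟨l, hl⟩ := hodd
      omega
    have hm2 : 2 ≤ m := by omega
    set S : Set (ZMod n → ZMod n) :=
      (fun σ : Equiv.Perm (ZMod n) => (σ : ZMod n → ZMod n)) '' ↑P with hSdef
    set W := Submodule.span (ZMod n) S with hWdef
    have hr : finrank (ZMod n) W ≤ m := dim_lemma n hp hodd hn5 P h
    obtain ⟨s, hscard, hs⟩ := exists_coords (ZMod n) (ZMod n) W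
    set r := s.card with hrdef
    have hrm : r ≤ m := le_of_eq_of_le hscard hr
    set e : Fin r → ZMod n := fun t => ((s.equivFin.symm t : {x // x ∈ s}) : ZMod n) with he_def
    have he : Function.Injective e := by
      intro a b hab
      exact s.equivFin.symm.injective (Subtype.ext hab)
    have hinj : ∀ σ ∈ P, ∀ τ ∈ P, (∀ t : Fin r, σ (e t) = τ (e t)) → σ = τ := by
      intro σ hσ τ hτ hagree
      have hvW : ((σ : ZMod n → ZMod n) - (τ : ZMod n → ZMod n)) ∈ W :=
        Submodule.sub_mem _
          (Submodule.subset_span ⟨σ, by simpa using hσ, rfl⟩)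
          (Submodule.subset_span ⟨τ, by simpa using hτ, rfl⟩)
      have hz : ∀ i ∈ s, ((σ : ZMod n → ZMod n) - (τ : ZMod n → ZMod n)) i = 0 := by
        intro i hi
        have ht := hagree (s.equivFin ⟨i, hi⟩)
        have hei : e (s.equivFin ⟨i, hi⟩) = i := by
          rw [he_def]
          simp
        rw [hei] at ht
        simp [ht]
      have hv0 := hs _ hvW hz
      apply Equiv.ext
      intro i
      have := congrFun hv0 i
      simpa [sub_eq_zero] using this
    have hcount := count_lemma n hp hodd P h r e he hinj
    have hpad : (∏ k ∈ range r, (if k = 0 then n else (n - k + 1) / 2))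
        ≤ ∏ k ∈ range m, (if k = 0 then n else (n - k + 1) / 2) := by
      apply Finset.prod_le_prod_of_subset_of_one_le' (Finset.range_subset_range.2 hrm)
      intro k hk _
      rw [Finset.mem_range] at hk
      split
      · omega
      · rw [Nat.le_div_iff_mul_le (by norm_num)]
        omega
    have hsplit : (∏ k ∈ range m, (if k = 0 then n else (n - k + 1) / 2))
        = n * ∏ k ∈ Ico 1 m, (n - k + 1) / 2 := by
      rw [Finset.range_eq_Ico, Finset.prod_eq_prod_Ico_succ_bot (by omega : 0 < m)]
      rw [if_pos rfl]
      congr 1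
      apply Finset.prod_congr rfl
      intro k hk
      rw [Finset.mem_Ico] at hk
      rw [if_neg (by omega)]
    have hhalf : 2 ^ (m - 1) * ∏ k ∈ Ico 1 m, (n - k + 1) / 2
        ≤ ∏ k ∈ Ico 1 m, (n - k + 1) := by
      have hcard : (Ico 1 m).card = m - 1 := by rw [Nat.card_Ico]
      rw [← hcard, ← Finset.prod_const 2, ← Finset.prod_mul_distrib]
      apply Finset.prod_le_prod'
      intro k _
      calc 2 * ((n - k + 1) / 2) = (n - k + 1) / 2 * 2 := by ring
        _ ≤ n - k + 1 := Nat.div_mul_le_self _ _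
    have hIco : (∏ k ∈ Ico 1 m, (n - k + 1)) = ∏ k ∈ Ico 1 m, (2 * m + 2 - k) := by
      apply Finset.prod_congr rfl
      intro k hk
      rw [Finset.mem_Ico] at hk
      congr 1
      omega
    have hfact := prod_reflect m hm2
    have hchoose : (2 * m + 1).factorial ≤ 4 ^ m * (m.factorial * (m + 1).factorial) := by
      have hc := Nat.choose_mul_factorial_mul_factorial (show m ≤ 2 * m + 1 by omega)
      have h21 : 2 * m + 1 - m = m + 1 := by omega
      rw [h21] at hc
      calc (2 * m + 1).factorial = (2 * m + 1).choose m * m.factorial * (m + 1).factorial :=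
            hc.symm
        _ ≤ 4 ^ m * m.factorial * (m + 1).factorial := by
            apply Nat.mul_le_mul_right
            apply Nat.mul_le_mul_right
            exact Nat.choose_middle_le_pow m
        _ = 4 ^ m * (m.factorial * (m + 1).factorial) := by ring
    have hN1 : P.card ≤ n * ∏ k ∈ Ico 1 m, (n - k + 1) / 2 :=
      hcount.trans (hpad.trans_eq hsplit)
    have hN3 : P.card * 2 ^ (m - 1) * (m + 2).factorial
        ≤ n * (4 ^ m * (m.factorial * (m + 1).factorial)) := by
      calc P.card * 2 ^ (m - 1) * (m + 2).factorial
          ≤ (n * ∏ k ∈ Ico 1 m, (n - k + 1) / 2) * 2 ^ (m - 1) * (m + 2).factorial := by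
            apply Nat.mul_le_mul_right
            apply Nat.mul_le_mul_right
            exact hN1
        _ = n * (2 ^ (m - 1) * ∏ k ∈ Ico 1 m, (n - k + 1) / 2) * (m + 2).factorial := by
            ring
        _ ≤ n * (∏ k ∈ Ico 1 m, (n - k + 1)) * (m + 2).factorial := by
            apply Nat.mul_le_mul_right
            exact Nat.mul_le_mul_left _ hhalf
        _ = n * ((∏ k ∈ Ico 1 m, (2 * m + 2 - k)) * (m + 2).factorial) := by
            rw [hIco]; ring
        _ = n * (2 * m + 1).factorial := by rw [hfact]
        _ ≤ n * (4 ^ m * (m.factorial * (m + 1).factorial)) :=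
            Nat.mul_le_mul_left _ hchoose
    have hN4 : P.card * 2 ^ (m - 1) * (m + 2) ≤ n * 4 ^ m * m.factorial := by
      have hpos := (m + 1).factorial_pos
      apply Nat.le_of_mul_le_mul_right _ hpos
      calc P.card * 2 ^ (m - 1) * (m + 2) * (m + 1).factorial
          = P.card * 2 ^ (m - 1) * ((m + 2) * (m + 1).factorial) := by ring
        _ = P.card * 2 ^ (m - 1) * (m + 2).factorial := by
            rw [Nat.factorial_succ (m + 1)]
        _ ≤ n * (4 ^ m * (m.factorial * (m + 1).factorial)) := hN3
        _ = n * 4 ^ m * m.factorial * (m + 1).factorial := by ring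
    -- real part
    have hR1 : (P.card : ℝ) * (2 ^ (m - 1) * ((m : ℝ) + 2)) ≤ (n : ℝ) * 4 ^ m * m.factorial := by
      have := hN4
      have hcast : ((P.card * 2 ^ (m - 1) * (m + 2) : ℕ) : ℝ)
          ≤ ((n * 4 ^ m * m.factorial : ℕ) : ℝ) := by exact_mod_cast this
      push_cast at hcast
      linarith
    have hfb := fact_bound m (by omega)
    have hR2 : (P.card : ℝ) * (2 ^ (m - 1) * ((m : ℝ) + 2))
        ≤ (n : ℝ) * 4 ^ m * (Real.exp 1 * Real.sqrt m * ((m : ℝ) / Real.exp 1) ^ m) := by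
      refine hR1.trans ?_
      rw [mul_assoc, mul_assoc]
      apply mul_le_mul_of_nonneg_left _ (by positivity : (0:ℝ) ≤ (n:ℝ))
      exact mul_le_mul_of_nonneg_left hfb (by positivity)
    have hkey : (n : ℝ) * 4 ^ m * (Real.exp 1 * Real.sqrt m * ((m : ℝ) / Real.exp 1) ^ m)
        ≤ (Real.exp 1 ^ 2 / Real.pi * n * ((2 * (m:ℝ)) / Real.exp 1) ^ m)
            * (2 ^ (m - 1) * ((m : ℝ) + 2)) := by
      have h2m : ((2 * (m:ℝ)) / Real.exp 1) ^ m = 2 ^ m * ((m : ℝ) / Real.exp 1) ^ m := by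
        rw [← mul_pow]
        congr 1
        ring
      rw [h2m]
      have h4m : (4 : ℝ) ^ m = 2 * (2 ^ m * 2 ^ (m - 1)) := by
        rw [show (4:ℝ) = 2 ^ 2 by norm_num, ← pow_mul]
        have hexp : 2 * m = 1 + (m + (m - 1)) := by omega
        rw [hexp, pow_add, pow_add, pow_one]
      have hfinal : 2 * Real.exp 1 * Real.sqrt m ≤ Real.exp 1 ^ 2 / Real.pi * ((m : ℝ) + 2) := by
        rw [div_mul_eq_mul_div, le_div_iff₀ Real.pi_pos]
        have hc := const_ineq m
        nlinarith [Real.exp_pos 1, Real.sqrt_nonneg (m : ℝ), Real.pi_pos]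
      have hcommon : (0:ℝ) ≤ (n : ℝ) * 2 ^ m * 2 ^ (m - 1) * ((m : ℝ) / Real.exp 1) ^ m := by
        positivity
      calc (n : ℝ) * 4 ^ m * (Real.exp 1 * Real.sqrt m * ((m : ℝ) / Real.exp 1) ^ m)
          = ((n : ℝ) * 2 ^ m * 2 ^ (m - 1) * ((m : ℝ) / Real.exp 1) ^ m)
              * (2 * Real.exp 1 * Real.sqrt m) := by rw [h4m]; ring
        _ ≤ ((n : ℝ) * 2 ^ m * 2 ^ (m - 1) * ((m : ℝ) / Real.exp 1) ^ m)
              * (Real.exp 1 ^ 2 / Real.pi * ((m : ℝ) + 2)) :=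
            mul_le_mul_of_nonneg_left hfinal hcommon
        _ = (Real.exp 1 ^ 2 / Real.pi * n * (2 ^ m * ((m : ℝ) / Real.exp 1) ^ m))
              * (2 ^ (m - 1) * ((m : ℝ) + 2)) := by ring
    have hposd : (0:ℝ) < 2 ^ (m - 1) * ((m : ℝ) + 2) := by positivity
    have hfin : (P.card : ℝ)
        ≤ Real.exp 1 ^ 2 / Real.pi * n * ((2 * (m:ℝ)) / Real.exp 1) ^ m :=
      le_of_mul_le_mul_right (hR2.trans hkey) hposd
    have hbase : ((n : ℝ) - 1) / Real.exp 1 = (2 * (m:ℝ)) / Real.exp 1 := by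
      rw [hnm]
      push_cast
      ring_nf
    rw [hbase]
    exact hfin
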